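/- Let E = (E⁰, E¹, r, s) be a topological graph with E⁰ totally disconnected and with r proper and surjective. If f ≈ g in C_c(E⁰, ℤ)⁺, then there exist finitely many compact open sets U₁, …, Uₙ ⊆ E⁰ and natural numbers p, q and q₁, …, qₙ such that Θᵖ(f) = Σᵢ Θ^{qᵢ}(1_{Uᵢ}) and Θ^q(g) = Σᵢ 1_{Uᵢ}. -/

import Mathlib

open Set

/-- A topological graph `E = (E⁰, E¹, r, s)`: a continuous range map and a source map
that is a local homeomorphism, between locally compact Hausdorff spaces. -/
structure TopGraph (V E : Type*) [TopologicalSpace V] [TopologicalSpace E] where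
  r : E → V
  s : E → V
  continuous_r : Continuous r
  isLocalHomeomorph_s : IsLocalHomeomorph s

/-- `C_c(E⁰, ℤ)⁺`: compactly supported continuous functions `E⁰ → ℤ` with nonnegative
values. -/
def CcPosV (V : Type*) [TopologicalSpace V] : Set (V → ℤ) :=
  {f | Continuous f ∧ HasCompactSupport f ∧ ∀ v, 0 ≤ f v}

namespace TopGraph

variable {V E : Type*} [TopologicalSpace V] [TopologicalSpace E] (gr : TopGraph V E)

/-- `Θ¹(f)(v) = Σ_{e ∈ E¹, s(e) = v} f(r(e))` (a finite sum when `r` is proper and `f`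
is compactly supported). -/
noncomputable def theta1 (f : V → ℤ) : V → ℤ :=
  fun v => ∑ᶠ e ∈ {e : E | gr.s e = v}, f (gr.r e)

/-- `Θⁿ = (Θ¹)ⁿ`, so that `Θⁿ(f)(v) = Σ_{λ ∈ Eⁿ, s(λ) = v} f(r(λ))`. -/
noncomputable def theta (n : ℕ) (f : V → ℤ) : V → ℤ := (theta1 gr)^[n] f


/-- `f ∼ g` iff `Θᵖ(f) = Θ^q(g)` for some `p, q ∈ ℕ`. -/
def Sim (f g : V → ℤ) : Prop := ∃ p q : ℕ, gr.theta p f = gr.theta q g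

/-- `f ≈ g` iff there are finitely many pairs `(fᵢ, gᵢ)` in `C_c(E⁰,ℤ)⁺ × C_c(E⁰,ℤ)⁺`
with `f ∼ Σᵢ fᵢ`, `g ∼ Σᵢ gᵢ`, and `fᵢ ∼ gᵢ` for all `i`. -/
def Approx (f g : V → ℤ) : Prop :=
  ∃ L : List ((V → ℤ) × (V → ℤ)),
    (∀ p ∈ L, p.1 ∈ CcPosV V ∧ p.2 ∈ CcPosV V) ∧
    gr.Sim f (L.map Prod.fst).sum ∧ gr.Sim g (L.map Prod.snd).sum ∧
    ∀ p ∈ L, gr.Sim p.1 p.2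

lemma continuous_s : Continuous gr.s := gr.isLocalHomeomorph_s.continuous

lemma fiber_inter_compact_finite [T1Space V] {K : Set E} (hK : IsCompact K) (v : V) :
    ({e : E | gr.s e = v} ∩ K).Finite := by
  have hfib : {e : E | gr.s e = v} = gr.s ⁻¹' {v} := rfl
  set S := {e : E | gr.s e = v} ∩ K with hS
  have hScpt : IsCompact S :=
    hK.inter_left (hfib ▸ (isClosed_singleton.preimage gr.continuous_s))
  have hiso : ∀ x ∈ S, ∃ U : Set E, IsOpen U ∧ x ∈ U ∧ S ∩ U ⊆ {x} := by
    intro x hx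
    obtain ⟨φ, hxφ, hφ⟩ := gr.isLocalHomeomorph_s x
    refine ⟨φ.source, φ.open_source, hxφ, ?_⟩
    rintro y ⟨⟨hy, -⟩, hys⟩
    have h1 : gr.s y = gr.s x := by rw [hy, hx.1]
    have := φ.injOn (by exact hys) (by exact hxφ) (by rw [← hφ]; exact h1)
    exact this
  choose! U hUopen hxU hUsub using hiso
  obtain ⟨b', hb'S, hb'fin, hcover⟩ :=
    hScpt.elim_finite_subcover_image (b := S) (c := U) (fun x hx => hUopen x hx)
      (fun y hy => mem_iUnion₂.2 ⟨y, hy, hxU y hy⟩)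
  refine hb'fin.subset (fun y hy => ?_)
  obtain ⟨x, hxb, hyU⟩ := mem_iUnion₂.1 (hcover hy)
  have : y = x := hUsub x (hb'S hxb) ⟨hy, hyU⟩
  exact this ▸ hxb

variable {gr}

section proper
variable (hproper : IsProperMap gr.r)
include hproper

lemma hcs_comp {f : V → ℤ} (hf : HasCompactSupport f) :
    HasCompactSupport (fun e => f (gr.r e)) := by
  have h1 : IsCompact (gr.r ⁻¹' tsupport f) := hproper.isCompact_preimage hf
  refine IsCompact.of_isClosed_subset h1 (isClosed_tsupport _) ?_
  refine closure_minimal ?_ ((isClosed_tsupport f).preimage gr.continuous_r)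
  intro e he
  exact subset_closure he

lemma support_finite [T1Space V] {f : V → ℤ} (hf : HasCompactSupport f) (v : V) :
    ({e : E | gr.s e = v} ∩ Function.support fun e => f (gr.r e)).Finite :=
  (gr.fiber_inter_compact_finite (hcs_comp hproper hf) v).subset
    (inter_subset_inter_right _ subset_closure)

end proper

lemma theta1_eq_sum {f : V → ℤ} (v : V) (T : Finset E) (h1 : ∀ e ∈ T, gr.s e = v)
    (h2 : {e : E | gr.s e = v} ∩ Function.support (fun e => f (gr.r e)) ⊆ ↑T) :
    gr.theta1 f v = ∑ e ∈ T, f (gr.r e) := by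
  have : gr.theta1 f v = ∑ᶠ e ∈ {e : E | gr.s e = v}, f (gr.r e) := rfl
  rw [this, finsum_mem_inter_support_eq' (fun e => f (gr.r e)) _ ↑T
    (fun x hx => ⟨fun hs => h2 ⟨hs, hx⟩, fun ht => h1 x ht⟩), finsum_mem_coe_finset]

section proper2
variable [T2Space V] [T2Space E] (hproper : IsProperMap gr.r)
include hproper

lemma theta1_add {f g : V → ℤ} (hf : HasCompactSupport f) (hg : HasCompactSupport g) :
    gr.theta1 (f + g) = gr.theta1 f + gr.theta1 g := by
  funext v
  classical
  set T : Finset E := (support_finite hproper hf v).toFinset ∪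
    (support_finite hproper hg v).toFinset with hT
  have hTfib : ∀ e ∈ T, gr.s e = v := by
    intro e he
    rcases Finset.mem_union.1 he with h | h
    · exact ((support_finite hproper hf v).mem_toFinset.1 h).1
    · exact ((support_finite hproper hg v).mem_toFinset.1 h).1
  have e1 : gr.theta1 (f + g) v = ∑ e ∈ T, (f + g) (gr.r e) := by
    refine gr.theta1_eq_sum v T hTfib ?_
    rintro e ⟨hev, hes⟩
    have : f (gr.r e) ≠ 0 ∨ g (gr.r e) ≠ 0 := by
      by_contra hc
      push_neg at hc
      exact hes (by simp [Pi.add_apply, hc.1, hc.2])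
    rcases this with h | h
    · exact Finset.mem_union.2 (Or.inl ((support_finite hproper hf v).mem_toFinset.2 ⟨hev, h⟩))
    · exact Finset.mem_union.2 (Or.inr ((support_finite hproper hg v).mem_toFinset.2 ⟨hev, h⟩))
  have e2 : gr.theta1 f v = ∑ e ∈ T, f (gr.r e) := by
    refine gr.theta1_eq_sum v T hTfib ?_
    rintro e ⟨hev, hes⟩
    exact Finset.mem_union.2 (Or.inl ((support_finite hproper hf v).mem_toFinset.2 ⟨hev, hes⟩))
  have e3 : gr.theta1 g v = ∑ e ∈ T, g (gr.r e) := by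
    refine gr.theta1_eq_sum v T hTfib ?_
    rintro e ⟨hev, hes⟩
    exact Finset.mem_union.2 (Or.inr ((support_finite hproper hg v).mem_toFinset.2 ⟨hev, hes⟩))
  simp only [Pi.add_apply] at e1 ⊢
  rw [e1, e2, e3, Finset.sum_add_distrib]

lemma theta1_nonneg {f : V → ℤ} (hf : HasCompactSupport f) (h : ∀ v, 0 ≤ f v) (v : V) :
    0 ≤ gr.theta1 f v := by
  classical
  rw [gr.theta1_eq_sum v (support_finite hproper hf v).toFinset
    (fun e he => ((support_finite hproper hf v).mem_toFinset.1 he).1)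
    (fun e he => (support_finite hproper hf v).mem_toFinset.2 he)]
  exact Finset.sum_nonneg fun e _ => h _

lemma theta1_hcs {f : V → ℤ} (hf : HasCompactSupport f) :
    HasCompactSupport (gr.theta1 f) := by
  have hKc : IsCompact (gr.s '' tsupport fun e => f (gr.r e)) :=
    (hcs_comp hproper hf).image gr.continuous_s
  refine HasCompactSupport.intro hKc (fun v hv => ?_)
  rw [gr.theta1_eq_sum v ∅ (by simp) ?_, Finset.sum_empty]
  rintro e ⟨hev, hes⟩
  exact absurd ⟨e, subset_closure hes, hev⟩ hv

end proper2


lemma theta1_continuous [T2Space V] [T2Space E] (hproper : IsProperMap gr.r) {f : V → ℤ}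
    (hfc : Continuous f) (hf : HasCompactSupport f) : Continuous (gr.theta1 f) := by
  classical
  set g : E → ℤ := fun e => f (gr.r e) with hg
  have hgc : Continuous g := hfc.comp gr.continuous_r
  have hgK : HasCompactSupport g := hcs_comp hproper hf
  set K := tsupport g with hK
  rw [continuous_iff_continuousAt]
  intro v
  have hFfin : ({e : E | gr.s e = v} ∩ K).Finite := gr.fiber_inter_compact_finite hgK v
  set F := {e : E | gr.s e = v} ∩ K with hF
  choose φ hφmem hφeq using gr.isLocalHomeomorph_s
  obtain ⟨D, hD, hDdisj⟩ := hFfin.t2_separation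
  set W : E → Set E := fun e => D e ∩ (φ e).source ∩ g ⁻¹' {g e} with hW
  have hWopen : ∀ e, IsOpen (W e) :=
    fun e => ((hD e).2.inter (φ e).open_source).inter (hgc.isOpen_preimage _ (isOpen_discrete _))
  have hWmem : ∀ e, e ∈ W e := fun e => ⟨⟨(hD e).1, hφmem e⟩, rfl⟩
  have hWinj : ∀ e, ∀ x ∈ W e, ∀ y ∈ W e, gr.s x = gr.s y → x = y := by
    intro e x hx y hy hxy
    refine (φ e).injOn hx.1.2 hy.1.2 ?_
    have h1 : gr.s x = φ e x := congrFun (hφeq e) x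
    have h2 : gr.s y = φ e y := congrFun (hφeq e) y
    rw [← h1, ← h2]; exact hxy
  set WU := ⋃ e ∈ F, W e with hWU
  have hWUopen : IsOpen WU := isOpen_biUnion (fun e _ => hWopen e)
  have hC : IsCompact (K \ WU) := hgK.diff hWUopen
  set N : Set V := (⋂ e ∈ hFfin.toFinset, gr.s '' W e) ∩ (gr.s '' (K \ WU))ᶜ with hN
  have hNopen : IsOpen N := by
    refine IsOpen.inter ?_ (isOpen_compl_iff.2 (hC.image gr.continuous_s).isClosed)
    exact isOpen_biInter_finset fun e _ => gr.isLocalHomeomorph_s.isOpenMap _ (hWopen e)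
  have hvN : v ∈ N := by
    constructor
    · refine mem_iInter₂.2 fun e he => ?_
      have heF : e ∈ F := hFfin.mem_toFinset.1 he
      exact ⟨e, hWmem e, heF.1⟩
    · rintro ⟨y, ⟨hyK, hyW⟩, hyv⟩
      exact hyW (mem_biUnion (⟨hyv, hyK⟩ : y ∈ F) (hWmem y))
  have key : ∀ v' ∈ N, gr.theta1 f v' = gr.theta1 f v := by
    intro v' hv'
    have hex : ∀ e ∈ hFfin.toFinset, ∃ y, y ∈ W e ∧ gr.s y = v' := by
      intro e he
      obtain ⟨y, hyW, hyv⟩ := mem_iInter₂.1 hv'.1 e he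
      exact ⟨y, hyW, hyv⟩
    choose! x hxW hxs using hex
    set T : Finset E := hFfin.toFinset.attach.image (fun e => x e.1) with hT
    have hsum1 : gr.theta1 f v' = ∑ y ∈ T, f (gr.r y) := by
      refine theta1_eq_sum v' T ?_ ?_
      · intro y hy
        obtain ⟨e, _, rfl⟩ := Finset.mem_image.1 hy
        exact hxs e.1 e.2
      · rintro y ⟨hyv, hys⟩
        have hyK : y ∈ K := subset_closure hys
        have hyWU : y ∈ WU := by
          by_contra hc
          exact hv'.2 ⟨y, ⟨hyK, hc⟩, hyv⟩
        obtain ⟨e, heF, hyW⟩ := mem_iUnion₂.1 hyWU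
        have he' : e ∈ hFfin.toFinset := hFfin.mem_toFinset.2 heF
        have hyx : y = x e := hWinj e y hyW (x e) (hxW e he') (by rw [hyv, hxs e he'])
        exact Finset.mem_coe.2 (Finset.mem_image.2 ⟨⟨e, he'⟩, Finset.mem_attach _ _, hyx.symm⟩)
    have hinj : ∀ a ∈ hFfin.toFinset.attach, ∀ b ∈ hFfin.toFinset.attach,
        x a.1 = x b.1 → a = b := by
      rintro a - b - hab
      by_contra hne
      have hne' : a.1 ≠ b.1 := fun h => hne (Subtype.ext h)
      have hd := hDdisj (hFfin.mem_toFinset.1 a.2) (hFfin.mem_toFinset.1 b.2) hne'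
      have h1 : x a.1 ∈ D a.1 := (hxW a.1 a.2).1.1
      have h2 : x a.1 ∈ D b.1 := hab ▸ (hxW b.1 b.2).1.1
      exact (Set.disjoint_left.1 hd h1) h2
    have hsum2 : ∑ y ∈ T, f (gr.r y) = ∑ e ∈ hFfin.toFinset.attach, f (gr.r (x e.1)) :=
      Finset.sum_image hinj
    have hval : ∀ e ∈ hFfin.toFinset, f (gr.r (x e)) = f (gr.r e) := by
      intro e he
      have := (hxW e he).2
      simpa using this
    have hsum3 : ∑ e ∈ hFfin.toFinset.attach, f (gr.r (x e.1)) =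
        ∑ e ∈ hFfin.toFinset.attach, f (gr.r e.1) :=
      Finset.sum_congr rfl (fun e _ => hval e.1 e.2)
    have hsum4 : gr.theta1 f v = ∑ e ∈ hFfin.toFinset, f (gr.r e) := by
      refine theta1_eq_sum v _ (fun e he => (hFfin.mem_toFinset.1 he).1) ?_
      rintro e ⟨hev, hes⟩
      exact Finset.mem_coe.2 (hFfin.mem_toFinset.2 ⟨hev, subset_closure hes⟩)
    rw [hsum1, hsum2, hsum3, hsum4]
    exact Finset.sum_attach hFfin.toFinset (fun e => f (gr.r e))
  have hev : ∀ᶠ v' in nhds v, gr.theta1 f v' = gr.theta1 f v :=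
    Filter.eventually_of_mem (hNopen.mem_nhds hvN) key
  have hconst : ContinuousAt (fun _ : V => gr.theta1 f v) v := continuousAt_const
  exact hconst.congr (hev.mono fun v' h => h.symm)


section algebra
variable [T2Space V] [T2Space E] (hproper : IsProperMap gr.r)
include hproper

omit hproper in
omit hproper in
lemma theta_succ' (n : ℕ) (f : V → ℤ) : gr.theta (n + 1) f = gr.theta1 (gr.theta n f) := by
  rw [theta, theta, Function.iterate_succ_apply']

omit hproper in
omit hproper in
lemma theta_theta (m n : ℕ) (f : V → ℤ) :
    gr.theta m (gr.theta n f) = gr.theta (m + n) f := by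
  rw [theta, theta, theta, ← Function.iterate_add_apply]

lemma theta_mem (n : ℕ) {f : V → ℤ} (hf : f ∈ CcPosV V) : gr.theta n f ∈ CcPosV V := by
  induction n with
  | zero => exact hf
  | succ n ih =>
    rw [theta_succ']
    exact ⟨theta1_continuous hproper ih.1 ih.2.1, theta1_hcs hproper ih.2.1,
      theta1_nonneg hproper ih.2.1 ih.2.2⟩

lemma theta_hcs (n : ℕ) {f : V → ℤ} (hf : HasCompactSupport f) :
    HasCompactSupport (gr.theta n f) := by
  induction n with
  | zero => exact hf
  | succ n ih => rw [theta_succ']; exact theta1_hcs hproper ih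

lemma theta_add (n : ℕ) {f g : V → ℤ} (hf : HasCompactSupport f) (hg : HasCompactSupport g) :
    gr.theta n (f + g) = gr.theta n f + gr.theta n g := by
  induction n with
  | zero => rfl
  | succ n ih =>
    rw [theta_succ', theta_succ', theta_succ', ih,
      theta1_add hproper (theta_hcs hproper n hf) (theta_hcs hproper n hg)]

lemma theta_zero_fun (n : ℕ) : gr.theta n (0 : V → ℤ) = 0 := by
  induction n with
  | zero => rfl
  | succ n ih =>
    rw [theta_succ', ih]
    funext v
    rw [gr.theta1_eq_sum v ∅ (by simp) (by simp), Finset.sum_empty]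
    rfl

omit hproper in
lemma hcs_list_sum (l : List (V → ℤ)) (h : ∀ f ∈ l, HasCompactSupport f) :
    HasCompactSupport l.sum := by
  induction l with
  | nil =>
    simp only [List.sum_nil]
    exact HasCompactSupport.intro isCompact_empty (fun x _ => rfl)
  | cons a l ih =>
    rw [List.sum_cons]
    exact (h a List.mem_cons_self).add (ih (fun f hf => h f (List.mem_cons_of_mem a hf)))

lemma theta_list_sum (n : ℕ) (l : List (V → ℤ)) (h : ∀ f ∈ l, HasCompactSupport f) :
    gr.theta n l.sum = (l.map (gr.theta n)).sum := by
  induction l with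
  | nil => simpa using theta_zero_fun hproper n
  | cons a l ih =>
    rw [List.sum_cons, theta_add hproper n (h a List.mem_cons_self)
      (hcs_list_sum _ (fun f hf => h f (List.mem_cons_of_mem a hf))),
      ih (fun f hf => h f (List.mem_cons_of_mem a hf)), List.map_cons, List.sum_cons]

omit hproper in
lemma hcs_indicator {U : Set V} (hU : IsCompact U) :
    HasCompactSupport (Set.indicator U (1 : V → ℤ)) := by
  exact HasCompactSupport.intro hU (fun x hx => Set.indicator_of_notMem hx _)

end algebra

end TopGraph

-- generic decomposition lemma test
lemma continuous_indicator_clopen {X : Type*} [TopologicalSpace X] {U : Set X}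
    (ho : IsOpen U) (hc : IsClosed U) : Continuous (Set.indicator U (1 : X → ℤ)) := by
  classical
  have : Set.indicator U (1 : X → ℤ) = U.piecewise (1 : X → ℤ) (0 : X → ℤ) := by
    funext x
    by_cases hx : x ∈ U <;> simp [Set.indicator, Set.piecewise, hx]
  rw [this]
  refine Continuous.piecewise ?_ continuous_const continuous_const
  intro x hx
  rw [(isClopen_iff_frontier_eq_empty.1 ⟨hc, ho⟩)] at hx
  exact absurd hx (Set.notMem_empty x)

lemma exists_decomp_aux {X : Type*} [TopologicalSpace X] :
    ∀ (N : ℕ) (h : X → ℤ), h ∈ CcPosV X → (∀ v, h v ≤ (N : ℤ)) →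
    ∃ l : List (Set X), (∀ U ∈ l, IsCompact U ∧ IsOpen U) ∧
      h = (l.map fun U => Set.indicator U (1 : X → ℤ)).sum := by
  intro N
  induction N with
  | zero =>
    intro h hmem hb
    refine ⟨[], by simp, funext fun v => ?_⟩
    simp only [List.map_nil, List.sum_nil, Pi.zero_apply]
    exact le_antisymm (by simpa using hb v) (hmem.2.2 v)
  | succ N ih =>
    intro h hmem hb
    set U := Function.support h with hU
    have hUpre : U = h ⁻¹' ({0}ᶜ) := by
      ext x; simp [hU, Function.mem_support]
    have hUopen : IsOpen U := by
      rw [hUpre]; exact (isOpen_discrete _).preimage hmem.1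
    have hUclosed : IsClosed U := by
      rw [hUpre]; exact (isClosed_discrete _).preimage hmem.1
    have hUcpt : IsCompact U :=
      IsCompact.of_isClosed_subset hmem.2.1 hUclosed subset_closure
    set h' : X → ℤ := h - Set.indicator U (1 : X → ℤ) with hh'
    have hval : ∀ v, v ∈ U → 1 ≤ h v := by
      intro v hv
      have h1 : h v ≠ 0 := hv
      have h2 : 0 ≤ h v := hmem.2.2 v
      omega
    have h'mem : h' ∈ CcPosV X := by
      refine ⟨hmem.1.sub (continuous_indicator_clopen hUopen hUclosed), ?_, ?_⟩
      · refine HasCompactSupport.mono hmem.2.1 (fun x hx => ?_)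
        simp only [Function.mem_support] at hx ⊢
        intro hx0
        apply hx
        rw [hh']
        have : x ∉ U := fun hxU => hxU hx0
        simp [Pi.sub_apply, hx0, Set.indicator_of_notMem this]
      · intro v
        by_cases hv : v ∈ U
        · have := hval v hv
          simp only [hh', Pi.sub_apply, Set.indicator_of_mem hv, Pi.one_apply]
          omega
        · have hv0 : h v = 0 := by
            by_contra hc; exact hv hc
          simp [hh', Pi.sub_apply, Set.indicator_of_notMem hv, hv0]
    have h'b : ∀ v, h' v ≤ (N : ℤ) := by
      intro v
      by_cases hv : v ∈ U
      · have := hb v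
        simp only [hh', Pi.sub_apply, Set.indicator_of_mem hv, Pi.one_apply]
        push_cast at this ⊢
        omega
      · have hv0 : h v = 0 := by by_contra hc; exact hv hc
        simp [hh', Pi.sub_apply, Set.indicator_of_notMem hv, hv0]
    obtain ⟨l, hl1, hl2⟩ := ih h' h'mem h'b
    refine ⟨U :: l, ?_, ?_⟩
    · intro W hW
      rcases List.mem_cons.1 hW with rfl | hW
      · exact ⟨hUcpt, hUopen⟩
      · exact hl1 W hW
    · rw [List.map_cons, List.sum_cons, ← hl2, hh']
      funext v
      simp only [Pi.add_apply, Pi.sub_apply]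
      ring

lemma exists_decomp {X : Type*} [TopologicalSpace X] {h : X → ℤ} (hmem : h ∈ CcPosV X) :
    ∃ l : List (Set X), (∀ U ∈ l, IsCompact U ∧ IsOpen U) ∧
      h = (l.map fun U => Set.indicator U (1 : X → ℤ)).sum := by
  have himg : (insert 0 (h '' tsupport h)).Finite := by
    refine Set.Finite.insert 0 ?_
    have : IsCompact (h '' tsupport h) := hmem.2.1.image hmem.1
    exact this.finite_of_discrete
  obtain ⟨bnd, hbnd⟩ := himg.bddAbove
  have hble : ∀ v, h v ≤ bnd := by
    intro v
    by_cases hv : v ∈ tsupport h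
    · exact hbnd (Set.mem_insert_of_mem _ ⟨v, hv, rfl⟩)
    · have : h v = 0 := image_eq_zero_of_notMem_tsupport hv
      rw [this]; exact hbnd (Set.mem_insert _ _)
  refine exists_decomp_aux bnd.toNat h hmem (fun v => (hble v).trans (Int.self_le_toNat bnd))

lemma fin_sum_get {α β : Type*} [AddCommMonoid α] (l : List β) (F : β → α) :
    ∑ i : Fin l.length, F (l.get i) = (l.map F).sum := by
  conv_rhs => rw [← List.ofFn_get l]
  rw [List.map_ofFn, List.sum_ofFn]
  rfl

/-- **Statement 18.** Let `E` be a topological graph with `E⁰` totally disconnected and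
with `r` proper and surjective.  If `f ≈ g` in `C_c(E⁰, ℤ)⁺`, then there are finitely
many compact open sets `U₁, …, Uₙ ⊆ E⁰` and naturals `p, q, q₁, …, qₙ` with
`Θᵖ(f) = Σᵢ Θ^{qᵢ}(1_{Uᵢ})` and `Θ^q(g) = Σᵢ 1_{Uᵢ}`. -/

theorem approx_normal_form {V E : Type*}
    [TopologicalSpace V] [LocallyCompactSpace V] [T2Space V] [SecondCountableTopology V]
    [TotallyDisconnectedSpace V]
    [TopologicalSpace E] [LocallyCompactSpace E] [T2Space E] [SecondCountableTopology E]
    (gr : TopGraph V E) (hproper : IsProperMap gr.r) (hsurj : Function.Surjective gr.r)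
    (f g : V → ℤ) (hf : f ∈ CcPosV V) (hg : g ∈ CcPosV V) (h : gr.Approx f g) :
    ∃ (n : ℕ) (U : Fin n → Set V) (p q : ℕ) (qs : Fin n → ℕ),
      (∀ i, IsCompact (U i) ∧ IsOpen (U i)) ∧
      gr.theta p f = ∑ i, gr.theta (qs i) (Set.indicator (U i) 1) ∧
      gr.theta q g = ∑ i, Set.indicator (U i) (1 : V → ℤ) := by
  classical
  obtain ⟨L, hLmem, ⟨a, b, hab⟩, ⟨c, d, hcd⟩, hsim⟩ := h
  choose! P Q hPQ using hsim
  set Pm := (L.map P).sum with hPm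
  have hPle : ∀ pr ∈ L, P pr ≤ Pm := fun pr hpr =>
    List.single_le_sum (fun x _ => Nat.zero_le x) _ (List.mem_map_of_mem (f := P) hpr)
  have hfst : ∀ pr ∈ L, HasCompactSupport pr.1 := fun pr hpr => (hLmem pr hpr).1.2.1
  have hsnd_mem : ∀ pr ∈ L, pr.2 ∈ CcPosV V := fun pr hpr => (hLmem pr hpr).2
  set hfun : (V → ℤ) × (V → ℤ) → (V → ℤ) := fun pr => gr.theta d pr.2 with hhdef
  have hhmem : ∀ pr ∈ L, hfun pr ∈ CcPosV V := fun pr hpr =>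
    TopGraph.theta_mem hproper d (hsnd_mem pr hpr)
  set efun : (V → ℤ) × (V → ℤ) → ℕ := fun pr => b + (Pm - P pr) + Q pr with hedef
  have step1 : gr.theta ((Pm + d) + a) f =
      (L.map (fun pr => gr.theta (efun pr) (hfun pr))).sum := by
    have h1 : gr.theta ((Pm + d) + a) f = gr.theta ((Pm + d) + b) (L.map Prod.fst).sum := by
      rw [← TopGraph.theta_theta (Pm + d) a f, hab,
        TopGraph.theta_theta (Pm + d) b]
    rw [h1, TopGraph.theta_list_sum hproper _ _
      (fun x hx => by obtain ⟨pr, hpr, rfl⟩ := List.mem_map.1 hx; exact hfst pr hpr),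
      List.map_map]
    refine congrArg List.sum (List.map_congr_left (fun pr hpr => ?_))
    show gr.theta ((Pm + d) + b) pr.1 = gr.theta (efun pr) (hfun pr)
    have harith : (Pm + d) + b = ((Pm - P pr) + d + b) + P pr := by
      have := hPle pr hpr; omega
    rw [harith, ← TopGraph.theta_theta ((Pm - P pr) + d + b) (P pr) pr.1,
      hPQ pr hpr, TopGraph.theta_theta, hhdef]
    show gr.theta ((Pm - P pr) + d + b + Q pr) pr.2 = gr.theta (efun pr) (gr.theta d pr.2)
    rw [TopGraph.theta_theta]
    have harith2 : Pm - P pr + d + b + Q pr = efun pr + d := by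
      show Pm - P pr + d + b + Q pr = b + (Pm - P pr) + Q pr + d
      omega
    rw [harith2]
  have step2 : gr.theta c g = (L.map hfun).sum := by
    rw [hcd, TopGraph.theta_list_sum hproper d _
      (fun x hx => by obtain ⟨pr, hpr, rfl⟩ := List.mem_map.1 hx; exact (hsnd_mem pr hpr).2.1),
      List.map_map]
    rfl
  have hdec : ∀ pr ∈ L, ∃ l : List (Set V), (∀ U ∈ l, IsCompact U ∧ IsOpen U) ∧
      hfun pr = (l.map fun U => Set.indicator U (1 : V → ℤ)).sum :=
    fun pr hpr => exists_decomp (hhmem pr hpr)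
  choose! dec hdec1 hdec2 using hdec
  set M : List (Set V × ℕ) := (L.map (fun pr => (dec pr).map (fun U => (U, efun pr)))).flatten
    with hMdef
  have hMmem : ∀ x ∈ M, IsCompact x.1 ∧ IsOpen x.1 := by
    intro x hx
    obtain ⟨l, hl, hxl⟩ := List.mem_flatten.1 hx
    obtain ⟨pr, hpr, rfl⟩ := List.mem_map.1 hl
    obtain ⟨U, hU, rfl⟩ := List.mem_map.1 hxl
    exact hdec1 pr hpr U hU
  refine ⟨M.length, fun i => (M.get i).1, (Pm + d) + a, c, fun i => (M.get i).2,
    fun i => hMmem _ (List.get_mem M i), ?_, ?_⟩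
  · have hrhs : ∑ i : Fin M.length, gr.theta ((M.get i).2) (Set.indicator (M.get i).1 1) =
        (M.map (fun x => gr.theta x.2 (Set.indicator x.1 (1 : V → ℤ)))).sum :=
      fin_sum_get M (fun x => gr.theta x.2 (Set.indicator x.1 (1 : V → ℤ)))
    rw [hrhs, step1, hMdef, List.map_flatten, List.map_map, List.sum_flatten, List.map_map]
    refine (congrArg List.sum (List.map_congr_left (fun pr hpr => ?_))).symm
    simp only [Function.comp_apply]
    rw [List.map_map]
    have hcomp : ((fun x : Set V × ℕ => gr.theta x.2 (Set.indicator x.1 (1 : V → ℤ))) ∘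
        (fun U => (U, efun pr))) = fun U => gr.theta (efun pr) (Set.indicator U 1) := rfl
    rw [hcomp, hdec2 pr hpr, TopGraph.theta_list_sum hproper _ _
      (fun x hx => by
        obtain ⟨U, hU, rfl⟩ := List.mem_map.1 hx
        exact TopGraph.hcs_indicator (hdec1 pr hpr U hU).1), List.map_map]
    rfl
  · have hrhs : ∑ i : Fin M.length, Set.indicator (M.get i).1 (1 : V → ℤ) =
        (M.map (fun x => Set.indicator x.1 (1 : V → ℤ))).sum :=
      fin_sum_get M (fun x => Set.indicator x.1 (1 : V → ℤ))
    rw [hrhs, step2, hMdef, List.map_flatten, List.map_map, List.sum_flatten, List.map_map]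
    refine (congrArg List.sum (List.map_congr_left (fun pr hpr => ?_))).symm
    simp only [Function.comp_apply]
    rw [List.map_map, hdec2 pr hpr]
    rfl
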